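/- Let V and E be finite types with source and target maps s, t : E → V, and call T ⊆ E a spanning tree if the equivalence relation on V generated by {(s e, t e) : e ∈ T} is the total relation and card T = card V − 1. Then for any two spanning trees T and U there exists a finite sequence T = T₀, T₁, …, Tₙ = U of spanning trees such that each T_{i+1} is obtained from T_i by an elementary move, i.e. there exist e ∈ T_i and f ∉ T_i with T_{i+1} = (T_i ∖ {e}) ∪ {f}. -/

import Mathlib

/-- A subset `T` of the edges of a (multi)graph with source/target maps `s, t : E → V` is a
spanning tree if the equivalence relation on `V` generated by `{(s e, t e) : e ∈ T}` is the
total relation and `card T = card V − 1`. -/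
def IsSpanningTree {V E : Type*} [Fintype V] (s t : E → V) (T : Finset E) : Prop :=
  (∀ v w : V, Relation.EqvGen (fun a b => ∃ e ∈ T, s e = a ∧ t e = b) v w) ∧
  T.card = Fintype.card V - 1

open Relation

section Aux
variable {V E : Type*} (s t : E → V)

/-- The edge relation of a set of edges. -/
def STErel (S : Finset E) : V → V → Prop := fun a b => ∃ e ∈ S, s e = a ∧ t e = b

/-- The connectivity relation of a set of edges. -/
def STR (S : Finset E) : V → V → Prop := Relation.EqvGen (STErel s t S)

variable {s t}

lemma STR.refl (S : Finset E) (x : V) : STR s t S x x := EqvGen.refl x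
lemma STR.symm {S : Finset E} {x y : V} (h : STR s t S x y) : STR s t S y x := EqvGen.symm _ _ h
lemma STR.trans {S : Finset E} {x y z : V} (h : STR s t S x y) (h' : STR s t S y z) :
    STR s t S x z := EqvGen.trans _ _ _ h h'

lemma STR.mono {S S' : Finset E} (hSS : S ⊆ S') {x y : V} (h : STR s t S x y) :
    STR s t S' x y := by
  refine Relation.EqvGen.mono (r := STErel s t S) (p := STErel s t S') (fun a b ⟨e, he, h1, h2⟩ => ⟨e, hSS he, h1, h2⟩) _ _ h

lemma STR_insert [DecidableEq E] {S : Finset E} {e : E} {x y : V} :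
    STR s t (insert e S) x y ↔ STR s t S x y ∨
      (STR s t S x (s e) ∧ STR s t S (t e) y) ∨ (STR s t S x (t e) ∧ STR s t S (s e) y) := by
  constructor
  · intro h
    induction h with
    | rel a b hab =>
      obtain ⟨f, hf, h1, h2⟩ := hab
      rcases Finset.mem_insert.1 hf with rfl | hf
      · subst h1; subst h2
        exact Or.inr (Or.inl ⟨STR.refl _ _, STR.refl _ _⟩)
      · exact Or.inl (EqvGen.rel _ _ ⟨f, hf, h1, h2⟩)
    | refl a => exact Or.inl (STR.refl _ _)
    | symm a b _ ih =>
      rcases ih with h | ⟨h1, h2⟩ | ⟨h1, h2⟩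
      · exact Or.inl h.symm
      · exact Or.inr (Or.inr ⟨h2.symm, h1.symm⟩)
      · exact Or.inr (Or.inl ⟨h2.symm, h1.symm⟩)
    | trans a b c _ _ ih1 ih2 =>
      rcases ih1 with h | ⟨h1, h2⟩ | ⟨h1, h2⟩ <;>
        rcases ih2 with h' | ⟨h1', h2'⟩ | ⟨h1', h2'⟩
      · exact Or.inl (h.trans h')
      · exact Or.inr (Or.inl ⟨h.trans h1', h2'⟩)
      · exact Or.inr (Or.inr ⟨h.trans h1', h2'⟩)
      · exact Or.inr (Or.inl ⟨h1, h2.trans h'⟩)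
      · exact Or.inr (Or.inl ⟨h1, h2'⟩)
      · exact Or.inl (h1.trans h2')
      · exact Or.inr (Or.inr ⟨h1, h2.trans h'⟩)
      · exact Or.inl (h1.trans h2')
      · exact Or.inr (Or.inr ⟨h1, h2'⟩)
  · have hedge : STR s t (insert e S) (s e) (t e) :=
      EqvGen.rel _ _ ⟨e, Finset.mem_insert_self e S, rfl, rfl⟩
    have hmono : ∀ {x y : V}, STR s t S x y → STR s t (insert e S) x y :=
      fun h => h.mono (Finset.subset_insert e S)
    rintro (h | ⟨h1, h2⟩ | ⟨h1, h2⟩)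
    · exact hmono h
    · exact (hmono h1).trans (hedge.trans (hmono h2))
    · exact (hmono h1).trans (hedge.symm.trans (hmono h2))

lemma STR_empty {x y : V} (h : STR s t (∅ : Finset E) x y) : x = y := by
  induction h with
  | rel a b hab => obtain ⟨e, he, _⟩ := hab; exact absurd he (Finset.notMem_empty e)
  | refl a => rfl
  | symm _ _ _ ih => exact ih.symm
  | trans _ _ _ _ _ ih1 ih2 => exact ih1.trans ih2

/-- The connectivity setoid. -/
def STSetoid (s t : E → V) (S : Finset E) : Setoid V := EqvGen.setoid (STErel s t S)

lemma STSetoid_r {S : Finset E} {x y : V} : (STSetoid s t S).r x y ↔ STR s t S x y := Iff.rfl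

lemma card_quot_insert [Finite V] [DecidableEq E] (S : Finset E) (a : E) :
    Nat.card (Quotient (STSetoid s t S)) ≤
      Nat.card (Quotient (STSetoid s t (insert a S))) + 1 := by
  classical
  have hwd : ∀ v w : V, STR s t S v w →
      (if STR s t S v (s a) then (none : Option (Quotient (STSetoid s t (insert a S))))
        else some (Quotient.mk _ v)) =
      (if STR s t S w (s a) then none else some (Quotient.mk _ w)) := by
    intro v w hvw
    by_cases h : STR s t S v (s a)
    · rw [if_pos h, if_pos (hvw.symm.trans h)]
    · rw [if_neg h, if_neg (fun h' => h (hvw.trans h'))]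
      exact congrArg some (Quotient.sound (hvw.mono (Finset.subset_insert a S)))
  set f : Quotient (STSetoid s t S) → Option (Quotient (STSetoid s t (insert a S))) :=
    Quotient.lift _ (fun v w h => hwd v w h) with hf
  have hinj : Function.Injective f := by
    intro q q'
    induction q using Quotient.ind
    induction q' using Quotient.ind
    rename_i v w
    intro h
    simp only [hf, Quotient.lift_mk] at h
    by_cases h1 : STR s t S v (s a) <;> by_cases h2 : STR s t S w (s a)
    · exact Quotient.sound (h1.trans h2.symm)
    · rw [if_pos h1, if_neg h2] at h; exact absurd h (by simp)
    · rw [if_neg h1, if_pos h2] at h; exact absurd h (by simp)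
    · rw [if_neg h1, if_neg h2] at h
      have hvw : STR s t (insert a S) v w := Quotient.exact (Option.some_injective _ h)
      rw [STR_insert] at hvw
      rcases hvw with h' | ⟨h1', h2'⟩ | ⟨h1', h2'⟩
      · exact Quotient.sound h'
      · exact absurd h1' h1
      · exact absurd h2'.symm h2
  haveI : Finite (Quotient (STSetoid s t (insert a S))) := Quotient.finite _
  haveI := Fintype.ofFinite (Quotient (STSetoid s t (insert a S)))
  calc Nat.card (Quotient (STSetoid s t S))
      ≤ Nat.card (Option (Quotient (STSetoid s t (insert a S)))) :=
        Nat.card_le_card_of_injective f hinj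
    _ = _ := by
        simp [Nat.card_eq_fintype_card, Fintype.card_option]

lemma card_V_le [Fintype V] [DecidableEq E] (S : Finset E) :
    Fintype.card V ≤ Nat.card (Quotient (STSetoid s t S)) + S.card := by
  classical
  induction S using Finset.induction_on with
  | empty =>
    have : Function.Bijective (Quotient.mk (STSetoid s t (∅ : Finset E))) := by
      constructor
      · intro v w h
        exact STR_empty (Quotient.exact h)
      · exact Quotient.exists_rep
    have h := Nat.card_eq_of_bijective _ this
    rw [Finset.card_empty, add_zero, ← h, Nat.card_eq_fintype_card]
  | insert _ _ ha ih =>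
    rename_i a S'
    calc Fintype.card V ≤ Nat.card (Quotient (STSetoid s t S')) + S'.card := ih
      _ ≤ (Nat.card (Quotient (STSetoid s t (insert a S'))) + 1) + S'.card :=
          add_le_add_left (card_quot_insert S' a) _
      _ = Nat.card (Quotient (STSetoid s t (insert a S'))) + (insert a S').card := by
          rw [Finset.card_insert_of_notMem ha]; ring

lemma span_card_lower [Fintype V] [DecidableEq E] {S : Finset E}
    (hS : ∀ v w : V, STR s t S v w) : Fintype.card V ≤ S.card + 1 := by
  rcases isEmpty_or_nonempty V with hV | hV
  · simp [Fintype.card_eq_zero]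
  · have h1 : Nat.card (Quotient (STSetoid s t S)) = 1 := by
      rw [Nat.card_eq_one_iff_unique]
      constructor
      · constructor
        intro q q'
        induction q using Quotient.ind
        induction q' using Quotient.ind
        exact Quotient.sound (hS _ _)
      · exact ⟨Quotient.mk _ (Classical.arbitrary V)⟩
    have := card_V_le (s := s) (t := t) S
    omega

lemma exchange [Fintype V] [Fintype E] [DecidableEq E]
    {T U : Finset E} (hT : IsSpanningTree s t T) (hU : IsSpanningTree s t U)
    {e : E} (he : e ∈ T \ U) :
    ∃ f ∈ U \ T, IsSpanningTree s t (insert f (T.erase e)) ∧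
      insert f (T.erase e) \ U = (T \ U).erase e := by
  classical
  obtain ⟨heT, heU⟩ := Finset.mem_sdiff.1 he
  set T' := T.erase e with hT'def
  have hTtot : ∀ v w : V, STR s t T v w := hT.1
  have hUtot : ∀ v w : V, STR s t U v w := hU.1
  have hcard : T'.card = T.card - 1 := Finset.card_erase_of_mem heT
  have hTpos : 1 ≤ T.card := Finset.card_pos.2 ⟨e, heT⟩
  -- every vertex is connected in T' to s e or t e
  have hvab : ∀ v : V, STR s t T' v (s e) ∨ STR s t T' v (t e) := by
    intro v
    have h : STR s t (insert e T') v (s e) := by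
      rw [Finset.insert_erase heT]; exact hTtot v (s e)
    rcases STR_insert.mp h with h' | ⟨h1, _⟩ | ⟨h1, _⟩
    · exact Or.inl h'
    · exact Or.inl h1
    · exact Or.inr h1
  -- s e and t e are not connected in T'
  have hnab : ¬ STR s t T' (s e) (t e) := by
    intro hab
    have htot : ∀ v w : V, STR s t T' v w := by
      intro v w
      rcases hvab v with h1 | h1 <;> rcases hvab w with h2 | h2
      · exact h1.trans h2.symm
      · exact h1.trans (hab.trans h2.symm)
      · exact h1.trans (hab.symm.trans h2.symm)
      · exact h1.trans h2.symm
    have hlow := span_card_lower htot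
    have hc := hT.2
    omega
  -- there is an edge of U crossing the cut
  have hf : ∃ f ∈ U, ¬ (STR s t T' (s f) (s e) ↔ STR s t T' (t f) (s e)) := by
    by_contra hcon
    push_neg at hcon
    have key : ∀ x y : V, STR s t U x y →
        (STR s t T' x (s e) ↔ STR s t T' y (s e)) := by
      intro x y h
      induction h with
      | rel a b hab =>
        obtain ⟨g, hg, h1, h2⟩ := hab
        subst h1; subst h2
        exact hcon g hg
      | refl a => exact Iff.rfl
      | symm _ _ _ ih => exact ih.symm
      | trans _ _ _ _ _ ih1 ih2 => exact ih1.trans ih2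
    have := (key (s e) (t e) (hUtot _ _)).mp (STR.refl _ _)
    exact hnab this.symm
  obtain ⟨f, hfU, hfx⟩ := hf
  have hfT : f ∉ T := by
    intro hfT
    have hfT' : f ∈ T' := Finset.mem_erase.2 ⟨fun h => heU (h ▸ hfU), hfT⟩
    have : STR s t T' (s f) (t f) := EqvGen.rel _ _ ⟨f, hfT', rfl, rfl⟩
    exact hfx ⟨fun h => this.symm.trans h, fun h => this.trans h⟩
  refine ⟨f, Finset.mem_sdiff.2 ⟨hfU, hfT⟩, ?_, ?_⟩
  · -- insert f T' is a spanning tree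
    have hfT' : f ∉ T' := fun h => hfT (Finset.mem_of_mem_erase h)
    have hmono : ∀ {x y : V}, STR s t T' x y → STR s t (insert f T') x y :=
      fun h => h.mono (Finset.subset_insert f T')
    have hedge : STR s t (insert f T') (s f) (t f) :=
      EqvGen.rel _ _ ⟨f, Finset.mem_insert_self f T', rfl, rfl⟩
    have hab' : STR s t (insert f T') (s e) (t e) := by
      by_cases h1 : STR s t T' (s f) (s e)
      · have h2 : ¬ STR s t T' (t f) (s e) := fun h => hfx ⟨fun _ => h, fun _ => h1⟩
        have h3 : STR s t T' (t f) (t e) := (hvab (t f)).resolve_left h2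
        exact (hmono h1).symm.trans (hedge.trans (hmono h3))
      · have h2 : STR s t T' (t f) (s e) := by
          by_contra h2
          exact hfx ⟨fun h => absurd h h1, fun h => absurd h h2⟩
        have h3 : STR s t T' (s f) (t e) := (hvab (s f)).resolve_left h1
        exact (hmono h2).symm.trans (hedge.symm.trans (hmono h3))
    constructor
    · intro v w
      show STR s t (insert f T') v w
      rcases hvab v with h1 | h1 <;> rcases hvab w with h2 | h2
      · exact (hmono h1).trans (hmono h2).symm
      · exact (hmono h1).trans (hab'.trans (hmono h2).symm)
      · exact (hmono h1).trans (hab'.symm.trans (hmono h2).symm)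
      · exact (hmono h1).trans (hmono h2).symm
    · rw [Finset.card_insert_of_notMem hfT', hcard]
      have hc := hT.2
      omega
  · show insert f (T.erase e) \ U = (T \ U).erase e
    ext g
    simp only [Finset.mem_sdiff, Finset.mem_insert, Finset.mem_erase]
    constructor
    · rintro ⟨hg1 | ⟨hg2, hg3⟩, hg4⟩
      · exact absurd (hg1 ▸ hfU) hg4
      · exact ⟨hg2, hg3, hg4⟩
    · rintro ⟨hg1, hg2, hg3⟩
      exact ⟨Or.inr ⟨hg1, hg2⟩, hg3⟩

end Aux

/-- Any two spanning trees of a graph are connected by a finite sequence of spanning trees in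
which each successive tree is obtained from the previous one by an elementary move
`T ↦ (T ∖ {e}) ∪ {f}` with `e ∈ T`, `f ∉ T`. -/
theorem spanning_trees_connected_by_elementary_moves
    {V E : Type*} [Fintype V] [Fintype E] [DecidableEq E]
    (s t : E → V) (T U : Finset E)
    (hT : IsSpanningTree s t T) (hU : IsSpanningTree s t U) :
    ∃ (n : ℕ) (seq : Fin (n + 1) → Finset E),
      seq 0 = T ∧ seq (Fin.last n) = U ∧
      (∀ i, IsSpanningTree s t (seq i)) ∧
      (∀ i : Fin n, ∃ e ∈ seq i.castSucc, ∃ f ∉ seq i.castSucc,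
        seq i.succ = insert f ((seq i.castSucc).erase e)) := by
  classical
  obtain ⟨n, hn⟩ : ∃ n, (T \ U).card = n := ⟨_, rfl⟩
  induction n generalizing T with
  | zero =>
    have hsub : T ⊆ U := by
      rwa [Finset.card_eq_zero, Finset.sdiff_eq_empty_iff_subset] at hn
    have hTU : T = U := Finset.eq_of_subset_of_card_le hsub (by rw [hT.2, hU.2])
    exact ⟨0, fun _ => T, rfl, hTU, fun _ => hT, fun i => i.elim0⟩
  | succ n ih =>
    have hne : (T \ U).Nonempty := Finset.card_pos.mp (by omega)
    obtain ⟨e, he⟩ := hne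
    obtain ⟨heT, heU⟩ := Finset.mem_sdiff.1 he
    obtain ⟨f, hfUT, hT2, hsd⟩ := exchange hT hU he
    obtain ⟨hfU, hfT⟩ := Finset.mem_sdiff.1 hfUT
    set T2 := insert f (T.erase e) with hT2def
    have hn2 : (T2 \ U).card = n := by
      rw [hsd, Finset.card_erase_of_mem he]
      omega
    obtain ⟨m, seq, h0, hlast, hsp, hmv⟩ := ih T2 hT2 hn2
    refine ⟨m + 1, Fin.cases T seq, ?_, ?_, ?_, ?_⟩
    · simp only [Fin.cases_zero]
    · have h : Fin.last (m + 1) = (Fin.last m).succ := rfl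
      rw [h]
      simp only [Fin.cases_succ]
      exact hlast
    · intro i
      refine Fin.cases ?_ ?_ i
      · exact hT
      · intro j
        simp only [Fin.cases_succ]
        exact hsp j
    · intro i
      refine Fin.cases ?_ ?_ i
      · refine ⟨e, ?_, f, ?_, ?_⟩
        · simp only [Fin.castSucc_zero, Fin.cases_zero]; exact heT
        · simp only [Fin.castSucc_zero, Fin.cases_zero]; exact hfT
        · simp only [Fin.cases_succ, Fin.castSucc_zero, Fin.cases_zero]
          rw [h0]
      · intro j
        have h1 : (j.succ).castSucc = (j.castSucc).succ := rfl
        rw [h1]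
        simp only [Fin.cases_succ]
        exact hmv j
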